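/- Let S = k[x₁, …, xₙ] be a polynomial ring over a field k with homogeneous maximal ideal 𝔪. Let L be a finite full set of non-unit squarefree monomials in S. To each g ∈ L associate a monomial ideal I_g of S such that: (1) every minimal monomial generator of I_g lies in k[supp g] (i.e., involves only variables dividing g); and (2) for any g ∈ L and any variable z with zg ∈ L, one has I_g ⊆ 𝔪 I_{zg}. Let f be an element of L of minimal degree and set H = L ∖ {f}. Then (∑_{g ∈ H} g·I_g) ∩ f·I_f = 𝔫·f·I_f, where 𝔫 is the ideal generated by the variables z such that zf ∈ H. -/

import Mathlib

open MvPolynomial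

noncomputable section

variable {k : Type*} [Field k]

/-- A monomial ideal: an ideal generated by monomials. -/
def IsMonomialIdeal {σ : Type*} (I : Ideal (MvPolynomial σ k)) : Prop :=
  ∃ A : Set (σ →₀ ℕ), I = Ideal.span ((fun a => MvPolynomial.monomial a (1 : k)) '' A)

/-- The exponent vectors of the minimal monomial generators of a monomial ideal:
the exponents of monomials of `I` that are minimal with respect to the componentwise
order (equivalently, divisibility). -/
def minimalExponents {σ : Type*} (I : Ideal (MvPolynomial σ k)) : Set (σ →₀ ℕ) :=
  {a : σ →₀ ℕ | MvPolynomial.monomial a (1 : k) ∈ I ∧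
    ∀ b : σ →₀ ℕ, MvPolynomial.monomial b (1 : k) ∈ I → b ≤ a → b = a}

/-- `Supp(I)`: the set of variables appearing in some minimal monomial generator of `I`. -/
def idealSupport {σ : Type*} (I : Ideal (MvPolynomial σ k)) : Set σ :=
  {i : σ | ∃ a ∈ minimalExponents I, a i ≠ 0}

/-- The squarefree monomial with support `g`. -/
def sqfMonomial {n : ℕ} (k : Type*) [Field k] (g : Finset (Fin n)) :
    MvPolynomial (Fin n) k :=
  ∏ i ∈ g, X i

open Pointwise

namespace Aux

variable {k : Type*} [Field k] {n : ℕ}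

def monimg (k : Type*) [Field k] {n : ℕ} (A : Set (Fin n →₀ ℕ)) : Set (MvPolynomial (Fin n) k) :=
  (fun a => MvPolynomial.monomial a (1 : k)) '' A

def eFin {n : ℕ} (g : Finset (Fin n)) : Fin n →₀ ℕ := ∑ i ∈ g, Finsupp.single i 1

lemma eFin_apply (g : Finset (Fin n)) (j : Fin n) : eFin g j = if j ∈ g then 1 else 0 := by
  classical
  simp [eFin, Finsupp.finset_sum_apply, Finsupp.single_apply]

lemma eFin_insert {g : Finset (Fin n)} {z : Fin n} (hz : z ∉ g) :
    eFin (insert z g) = Finsupp.single z 1 + eFin g :=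
  Finset.sum_insert hz

lemma sqf_eq (g : Finset (Fin n)) :
    sqfMonomial k g = monomial (eFin g) (1 : k) := by
  classical
  induction g using Finset.induction_on with
  | empty => simp [sqfMonomial, eFin]
  | insert a s h ih =>
      rw [sqfMonomial, Finset.prod_insert h, ← sqfMonomial, ih, X, monomial_mul, one_mul]
      congr 1
      rw [eFin, eFin, Finset.sum_insert h]

lemma mem_span_monimg {A : Set (Fin n →₀ ℕ)} {p : MvPolynomial (Fin n) k} :
    p ∈ Ideal.span (monimg k A) ↔ ∀ d ∈ p.support, ∃ a ∈ A, a ≤ d :=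
  mem_ideal_span_monomial_image

lemma exists_minExp {I : Ideal (MvPolynomial (Fin n) k)} (_hI : IsMonomialIdeal I)
    {d : Fin n →₀ ℕ} (hd : monomial d (1 : k) ∈ I) :
    ∃ a ∈ minimalExponents I, a ≤ d := by
  classical
  set S : Set (Fin n →₀ ℕ) := {b | b ≤ d ∧ monomial b (1 : k) ∈ I} with hS
  obtain ⟨a, haS, hm⟩ :=
    (IsWellFounded.wf (r := ((· < ·) : (Fin n →₀ ℕ) → (Fin n →₀ ℕ) → Prop))).has_min S
      ⟨d, le_rfl, hd⟩
  refine ⟨a, ⟨haS.2, ?_⟩, haS.1⟩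
  intro b hb hba
  by_contra hne
  exact hm b ⟨hba.trans haS.1, hb⟩ (lt_of_le_of_ne hba hne)

lemma span_minExp {I : Ideal (MvPolynomial (Fin n) k)} (hI : IsMonomialIdeal I) :
    I = Ideal.span (monimg k (minimalExponents I)) := by
  obtain ⟨A, hA⟩ := hI
  ext p
  conv_lhs => rw [hA]
  rw [mem_ideal_span_monomial_image, monimg, mem_ideal_span_monomial_image]
  constructor
  · intro h d hd
    obtain ⟨a, ha, had⟩ := h d hd
    have : monomial a (1 : k) ∈ I := by
      rw [hA]; exact Ideal.subset_span ⟨a, ha, rfl⟩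
    obtain ⟨b, hb, hba⟩ := exists_minExp ⟨A, hA⟩ this
    exact ⟨b, hb, hba.trans had⟩
  · intro h d hd
    obtain ⟨a, ha, had⟩ := h d hd
    have : monomial a (1 : k) ∈ Ideal.span ((fun a => monomial a (1:k)) '' A) := hA ▸ ha.1
    rw [mem_ideal_span_monomial_image] at this
    obtain ⟨b, hb, hba⟩ := this a (by simp [support_monomial])
    exact ⟨b, hb, hba.trans had⟩

lemma span_mon_mul (A B : Set (Fin n →₀ ℕ)) :
    Ideal.span (monimg k A) * Ideal.span (monimg k B) = Ideal.span (monimg k (A + B)) := by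
  rw [Ideal.span_mul_span']
  congr 1
  ext q
  simp only [monimg, Set.mem_mul, Set.mem_image, Set.mem_add]
  constructor
  · rintro ⟨_, ⟨a, ha, rfl⟩, _, ⟨b, hb, rfl⟩, rfl⟩
    exact ⟨a + b, ⟨a, ha, b, hb, rfl⟩, by rw [monomial_mul, one_mul]⟩
  · rintro ⟨_, ⟨a, ha, b, hb, rfl⟩, rfl⟩
    exact ⟨_, ⟨a, ha, rfl⟩, _, ⟨b, hb, rfl⟩, by rw [monomial_mul, one_mul]⟩

lemma span_sum {γ : Type*} [DecidableEq γ] (s : Finset γ) (T : γ → Set (MvPolynomial (Fin n) k)) :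
    ∑ g ∈ s, Ideal.span (T g) = Ideal.span (⋃ g ∈ s, T g) := by
  induction s using Finset.induction_on with
  | empty => simp
  | insert a s h ih =>
      rw [Finset.sum_insert h, Finset.set_biUnion_insert, Ideal.span_union, ih,
        Submodule.add_eq_sup]

lemma exists_mem_singleton_add {e : Fin n →₀ ℕ} {B : Set (Fin n →₀ ℕ)}
    {P : (Fin n →₀ ℕ) → Prop} :
    (∃ c ∈ ({e} : Set (Fin n →₀ ℕ)) + B, P c) ↔ ∃ a ∈ B, P (e + a) := by
  constructor
  · rintro ⟨c, hc, hcd⟩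
    obtain ⟨x, hx, y, hy, rfl⟩ := Set.mem_add.mp hc
    rw [Set.mem_singleton_iff] at hx
    subst hx
    exact ⟨y, hy, hcd⟩
  · rintro ⟨a, ha, h⟩
    exact ⟨e + a, Set.add_mem_add rfl ha, h⟩

lemma exists_mem_image_add {Z : Set (Fin n)} {B : Set (Fin n →₀ ℕ)}
    {P : (Fin n →₀ ℕ) → Prop} :
    (∃ c ∈ ((fun z => Finsupp.single z (1 : ℕ)) '' Z) + B, P c) ↔
      ∃ z ∈ Z, ∃ a ∈ B, P (Finsupp.single z 1 + a) := by
  constructor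
  · rintro ⟨c, hc, hcd⟩
    obtain ⟨x, hx, y, hy, rfl⟩ := Set.mem_add.mp hc
    obtain ⟨z, hz, rfl⟩ := hx
    exact ⟨z, hz, y, hy, hcd⟩
  · rintro ⟨z, hz, a, ha, h⟩
    exact ⟨_, Set.add_mem_add ⟨z, hz, rfl⟩ ha, h⟩

lemma exists_mem_biUnion {γ : Type*} {s : Finset γ} {T : γ → Set (Fin n →₀ ℕ)}
    {P : (Fin n →₀ ℕ) → Prop} :
    (∃ c ∈ ⋃ g ∈ s, T g, P c) ↔ ∃ g ∈ s, ∃ c ∈ T g, P c := by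
  constructor
  · rintro ⟨c, hc, hcd⟩
    obtain ⟨g, hg, hcg⟩ := Set.mem_iUnion₂.mp hc
    exact ⟨g, hg, c, hcg, hcd⟩
  · rintro ⟨g, hg, c, hc, hcd⟩
    exact ⟨c, Set.mem_iUnion₂.mpr ⟨g, hg, hc⟩, hcd⟩

end Aux

open Aux

theorem intersection_with_minimal_piece {k : Type*} [Field k] {n : ℕ}
    -- `L` is a finite set of non-unit squarefree monomials, identified with their supports.
    (L : Finset (Finset (Fin n)))
    (hne : ∀ g ∈ L, g ≠ ∅)
    -- `L` is lcm-closed.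
    (hlcm : ∀ f ∈ L, ∀ g ∈ L, f ∪ g ∈ L)
    -- a full path exists in `L` between any two elements `f ∣ g` of `L`.
    (hpath : ∀ f ∈ L, ∀ g ∈ L, f ⊆ g →
      ∃ (l : ℕ) (c : ℕ → Finset (Fin n)), c 0 = f ∧ c l = g ∧ (∀ j ≤ l, c j ∈ L) ∧
        ∀ j < l, ∃ z : Fin n, z ∉ c j ∧ c (j + 1) = insert z (c j))
    -- the assignment of a monomial ideal to each member of `L`.
    (I : Finset (Fin n) → Ideal (MvPolynomial (Fin n) k))
    (hmono : ∀ g ∈ L, IsMonomialIdeal (I g))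
    -- (1) every minimal monomial generator of `I g` involves only variables dividing `g`.
    (hsupp : ∀ g ∈ L, ∀ a ∈ minimalExponents (I g), ∀ i : Fin n, a i ≠ 0 → i ∈ g)
    -- (2) if `g ∈ L` and `z` is a variable with `z·g ∈ L`, then `I g ⊆ 𝔪 · I (z·g)`.
    (hstep : ∀ g ∈ L, ∀ z : Fin n, z ∉ g → insert z g ∈ L →
      I g ≤ Ideal.span (Set.range (X : Fin n → MvPolynomial (Fin n) k)) * I (insert z g))
    -- `f` is an element of `L` of minimal degree, and `H = L \ {f}`.
    (f : Finset (Fin n)) (hf : f ∈ L) (hmin : ∀ g ∈ L, f.card ≤ g.card) :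
    (∑ g ∈ L.erase f, Ideal.span {sqfMonomial k g} * I g) ⊓
        (Ideal.span {sqfMonomial k f} * I f) =
      Ideal.span ((fun z => (X z : MvPolynomial (Fin n) k)) ''
          {z : Fin n | z ∉ f ∧ insert z f ∈ L.erase f}) *
        (Ideal.span {sqfMonomial k f} * I f) := by
  classical
  set Z : Set (Fin n) := {z : Fin n | z ∉ f ∧ insert z f ∈ L.erase f} with hZ
  set A : Finset (Fin n) → Set (Fin n →₀ ℕ) := fun g => minimalExponents (I g) with hA
  have key : ∀ g ∈ L.erase f, ∃ z, z ∈ Z ∧ z ∈ g := by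
    intro g hg
    obtain ⟨hgf, hgL⟩ := Finset.mem_erase.mp hg
    have hfg : f ∪ g ∈ L := hlcm f hf g hgL
    have hne' : f ≠ f ∪ g := by
      intro h
      have hsub : g ⊆ f := by
        intro x hx
        rw [h]; exact Finset.mem_union_right _ hx
      exact hgf (Finset.eq_of_subset_of_card_le hsub (hmin g hgL))
    obtain ⟨l, c, h0, hl, hmem, hst⟩ := hpath f hf (f ∪ g) hfg Finset.subset_union_left
    have hlpos : 0 < l := by
      rcases Nat.eq_zero_or_pos l with h | h
      · rw [h, h0] at hl
        exact absurd hl hne'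
      · exact h
    have mono : ∀ j ≤ l, ∀ i ≤ j, c i ⊆ c j := by
      intro j
      induction j with
      | zero => intro _ i hi; rw [Nat.le_zero.mp hi]
      | succ m ih =>
          intro hm i hi
          rcases eq_or_lt_of_le hi with rfl | h
          · exact subset_rfl
          · obtain ⟨z, _, he⟩ := hst m (by omega)
            have : c i ⊆ c m := ih (by omega) i (by omega)
            rw [he]; exact this.trans (Finset.subset_insert _ _)
    obtain ⟨z, hz0, he1⟩ := hst 0 hlpos
    rw [h0] at hz0
    rw [h0] at he1
    have hc1L : insert z f ∈ L := by
      have := hmem 1 hlpos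
      rwa [he1] at this
    have hzg : z ∈ g := by
      have hz1 : z ∈ c 1 := by rw [he1]; exact Finset.mem_insert_self _ _
      have hsub : c 1 ⊆ f ∪ g := by rw [← hl]; exact mono l le_rfl 1 hlpos
      rcases Finset.mem_union.mp (hsub hz1) with h | h
      · exact absurd h hz0
      · exact h
    have hnef : insert z f ≠ f := fun h => hz0 (h ▸ Finset.mem_insert_self z f)
    exact ⟨z, ⟨hz0, Finset.mem_erase.mpr ⟨hnef, hc1L⟩⟩, hzg⟩
  have hprod : ∀ g ∈ L, Ideal.span {sqfMonomial k g} * I g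
      = Ideal.span (monimg k (({eFin g} : Set (Fin n →₀ ℕ)) + A g)) := by
    intro g hg
    conv_lhs => rw [sqf_eq, span_minExp (hmono g hg)]
    rw [show ({(monomial (eFin g) (1 : k) : MvPolynomial (Fin n) k)} : Set _)
        = monimg k {eFin g} from by simp [monimg], span_mon_mul]
  have hsum : ∑ g ∈ L.erase f, Ideal.span {sqfMonomial k g} * I g
      = Ideal.span (monimg k (⋃ g ∈ L.erase f, (({eFin g} : Set (Fin n →₀ ℕ)) + A g))) := by
    rw [Finset.sum_congr rfl (fun g hg => hprod g (Finset.mem_of_mem_erase hg)),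
      show (fun g => Ideal.span (monimg k (({eFin g} : Set (Fin n →₀ ℕ)) + A g)))
        = fun g => Ideal.span ((fun a => monomial a (1:k)) ''
            (({eFin g} : Set (Fin n →₀ ℕ)) + A g)) from rfl]
    rw [span_sum]
    congr 1
    rw [monimg, Set.image_iUnion₂]
  have hXZ : (fun z => (X z : MvPolynomial (Fin n) k)) '' Z
      = monimg k ((fun z => Finsupp.single z (1 : ℕ)) '' Z) := by
    rw [monimg, Set.image_image]
    refine Set.image_congr fun z _ => ?_
    rw [X]
  rw [hsum, hprod f hf, hXZ, span_mon_mul]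
  have haz : ∀ a ∈ A f, ∀ z ∉ f, a z = 0 := by
    intro a ha z hz
    by_contra h
    exact hz (hsupp f hf a ha z h)
  have core : ∀ d : Fin n →₀ ℕ,
      ((∃ g ∈ L.erase f, ∃ a ∈ A g, eFin g + a ≤ d) ∧ (∃ a ∈ A f, eFin f + a ≤ d)) ↔
      (∃ z ∈ Z, ∃ a ∈ A f, Finsupp.single z 1 + (eFin f + a) ≤ d) := by
    intro d
    constructor
    · rintro ⟨⟨g, hg, ag, hag, hgd⟩, a, ha, had⟩
      obtain ⟨z, hzZ, hzg⟩ := key g hg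
      refine ⟨z, hzZ, a, ha, ?_⟩
      rw [Finsupp.le_def]
      intro i
      by_cases hi : i = z
      · subst hi
        have h1 : (eFin g + ag) i ≤ d i := Finsupp.le_def.mp hgd i
        have h2 : eFin g i = 1 := by rw [eFin_apply, if_pos hzg]
        have h3 : eFin f i = 0 := by rw [eFin_apply, if_neg hzZ.1]
        have h4 : a i = 0 := haz a ha i hzZ.1
        rw [Finsupp.add_apply, h2] at h1
        simp only [Finsupp.add_apply, Finsupp.single_eq_same, h3, h4]
        omega
      · have h1 : (eFin f + a) i ≤ d i := Finsupp.le_def.mp had i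
        have h5 : Finsupp.single z (1 : ℕ) i = 0 :=
          Finsupp.single_eq_of_ne (fun h => hi h)
        simp only [Finsupp.add_apply, h5, zero_add]
        rw [Finsupp.add_apply] at h1
        exact h1
    · rintro ⟨z, hzZ, a, ha, hle⟩
      obtain ⟨hzf, hzH⟩ := hzZ
      have hzfL : insert z f ∈ L := (Finset.mem_erase.mp hzH).2
      constructor
      · have hIfsub : I f ≤ I (insert z f) :=
          le_trans (hstep f hf z hzf hzfL) Ideal.mul_le_right
        obtain ⟨b, hb, hba⟩ := exists_minExp (hmono _ hzfL) (hIfsub ha.1)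
        refine ⟨insert z f, hzH, b, hb, ?_⟩
        have h1 : eFin (insert z f) + b ≤ Finsupp.single z 1 + (eFin f + a) := by
          rw [eFin_insert hzf, add_assoc]
          exact add_le_add_right (add_le_add_right hba _) _
        exact h1.trans hle
      · exact ⟨a, ha, le_trans le_add_self hle⟩
  have bridge1 : ∀ d : Fin n →₀ ℕ,
      (∃ c ∈ ⋃ g ∈ L.erase f, (({eFin g} : Set (Fin n →₀ ℕ)) + A g), c ≤ d) ↔
        ∃ g ∈ L.erase f, ∃ a ∈ A g, eFin g + a ≤ d := by
    intro d
    rw [exists_mem_biUnion]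
    exact exists_congr fun g => and_congr_right fun _ => exists_mem_singleton_add
  have bridge2 : ∀ d : Fin n →₀ ℕ,
      (∃ c ∈ ({eFin f} : Set (Fin n →₀ ℕ)) + A f, c ≤ d) ↔
        ∃ a ∈ A f, eFin f + a ≤ d := fun d => exists_mem_singleton_add
  have bridge3 : ∀ d : Fin n →₀ ℕ,
      (∃ c ∈ ((fun z => Finsupp.single z (1 : ℕ)) '' Z) +
          (({eFin f} : Set (Fin n →₀ ℕ)) + A f), c ≤ d) ↔
        ∃ z ∈ Z, ∃ a ∈ A f, Finsupp.single z 1 + (eFin f + a) ≤ d := by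
    intro d
    rw [exists_mem_image_add]
    exact exists_congr fun z => and_congr_right fun _ => exists_mem_singleton_add
  ext p
  rw [Submodule.mem_inf, mem_span_monimg, mem_span_monimg, mem_span_monimg]
  constructor
  · rintro ⟨h1, h2⟩ d hd
    exact (bridge3 d).mpr ((core d).mp ⟨(bridge1 d).mp (h1 d hd), (bridge2 d).mp (h2 d hd)⟩)
  · intro h
    refine ⟨fun d hd => (bridge1 d).mpr ?_, fun d hd => (bridge2 d).mpr ?_⟩
    · exact ((core d).mpr ((bridge3 d).mp (h d hd))).1
    · exact ((core d).mpr ((bridge3 d).mp (h d hd))).2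

end
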